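/- For every integer k ≥ 1, the sum R_k = 𝐏_{k−1} + S_k is direct (𝐏_{k−1} ∩ S_k = {0}) and its dimension is dim R_k = k(k+2)(k+3)/2. -/

import Mathlib

open MeasureTheory

/-- Divergence of a vector field on ℝ³. -/
noncomputable def pdiv (v : (Fin 3 → ℝ) → (Fin 3 → ℝ)) (x : Fin 3 → ℝ) : ℝ :=
  ∑ i : Fin 3, fderiv ℝ (fun y => v y i) x (Pi.single i 1)

/-- Curl of a vector field on ℝ³. -/
noncomputable def pcurl (v : (Fin 3 → ℝ) → (Fin 3 → ℝ)) (x : Fin 3 → ℝ) : Fin 3 → ℝ :=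
  ![fderiv ℝ (fun y => v y 2) x (Pi.single 1 1) - fderiv ℝ (fun y => v y 1) x (Pi.single 2 1),
    fderiv ℝ (fun y => v y 0) x (Pi.single 2 1) - fderiv ℝ (fun y => v y 2) x (Pi.single 0 1),
    fderiv ℝ (fun y => v y 1) x (Pi.single 0 1) - fderiv ℝ (fun y => v y 0) x (Pi.single 1 1)]

/-- Gradient of a scalar field on ℝ³. -/
noncomputable def pgrad (p : (Fin 3 → ℝ) → ℝ) (x : Fin 3 → ℝ) : Fin 3 → ℝ :=
  fun i => fderiv ℝ p x (Pi.single i 1)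

/-- The Poincaré-type operator 𝔭: (𝔭u)(x) = (∫₀¹ t² u(tx) dt) x. -/
noncomputable def poin (u : (Fin 3 → ℝ) → ℝ) (x : Fin 3 → ℝ) : Fin 3 → ℝ :=
  (∫ t in (0:ℝ)..1, t ^ 2 * u (t • x)) • x

/-- `u` is a polynomial function of total degree at most `r` (P_r = {0} if r < 0). -/
def IsPolyDeg (r : ℤ) (u : (Fin 3 → ℝ) → ℝ) : Prop :=
  ∃ p : MvPolynomial (Fin 3) ℝ, (p = 0 ∨ (p.totalDegree : ℤ) ≤ r) ∧
    ∀ x, MvPolynomial.eval x p = u x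

/-- `v` is a vector field with polynomial components of total degree at most `r`. -/
def IsVecPolyDeg (r : ℤ) (v : (Fin 3 → ℝ) → (Fin 3 → ℝ)) : Prop :=
  ∀ i, IsPolyDeg r fun x => v x i

/-- `u` is a polynomial function. -/
def IsPolyFun (u : (Fin 3 → ℝ) → ℝ) : Prop :=
  ∃ p : MvPolynomial (Fin 3) ℝ, ∀ x, MvPolynomial.eval x p = u x

/-- Membership in S_k = {p ∈ (P̃_k)³ : x·p(x) = 0}. -/
def MemS (k : ℕ) (v : (Fin 3 → ℝ) → (Fin 3 → ℝ)) : Prop :=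
  (∀ i, ∃ p : MvPolynomial (Fin 3) ℝ, p.IsHomogeneous k ∧ ∀ x, MvPolynomial.eval x p = v x i) ∧
    ∀ x, ∑ i : Fin 3, x i * v x i = 0

/-- Membership in the first-family Nédélec space R_k = 𝐏_{k-1} ⊕ S_k. -/
def MemR (k : ℕ) (v : (Fin 3 → ℝ) → (Fin 3 → ℝ)) : Prop :=
  ∃ v₁ v₂, IsVecPolyDeg ((k : ℤ) - 1) v₁ ∧ MemS k v₂ ∧ v = v₁ + v₂


section Aux
open MvPolynomial

private abbrev Poly3 := MvPolynomial (Fin 3) ℝ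

private lemma degree_eq_sum' (d : Fin 3 →₀ ℕ) : d.degree = ∑ i, d i := by
  rw [Finsupp.degree]
  exact Finset.sum_subset (Finset.subset_univ _) (by simp)

private lemma degree_sub_single (d : Fin 3 →₀ ℕ) (i : Fin 3) (hi : d i ≠ 0) :
    (d - Finsupp.single i 1).degree + 1 = d.degree := by
  rw [degree_eq_sum', degree_eq_sum']
  fin_cases i <;>
    simp [Fin.sum_univ_three, Finsupp.tsub_apply, Finsupp.single_apply] at hi ⊢ <;>
    omega

private lemma homcomp_X_mul (n : ℕ) (i : Fin 3) (q : Poly3) :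
    homogeneousComponent (n+1) (X i * q) = X i * homogeneousComponent n q := by
  ext d
  rw [coeff_homogeneousComponent, coeff_X_mul', coeff_X_mul']
  by_cases hi : i ∈ d.support
  · have hd : d i ≠ 0 := Finsupp.mem_support_iff.mp hi
    have key := degree_sub_single d i hd
    simp only [hi, if_true, coeff_homogeneousComponent]
    by_cases h : d.degree = n + 1
    · simp [h, show (d - Finsupp.single i 1).degree = n by omega]
    · simp [h, show (d - Finsupp.single i 1).degree ≠ n by omega]
  · simp [hi]

noncomputable def evalMap : (Fin 3 → Poly3) →ₗ[ℝ] ((Fin 3 → ℝ) → (Fin 3 → ℝ)) where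
  toFun p := fun x i => eval x (p i)
  map_add' p q := by funext x i; simp
  map_smul' c p := by funext x i; simp [smul_eval]

lemma evalMap_injective : Function.Injective evalMap := by
  intro p q h
  funext i
  exact MvPolynomial.funext (fun x => congrFun (congrFun h x) i)

noncomputable def dotX : (Fin 3 → Poly3) →ₗ[ℝ] Poly3 where
  toFun p := ∑ i, X i * p i
  map_add' p q := by simp [mul_add, Finset.sum_add_distrib]
  map_smul' c p := by simp [mul_smul_comm, Finset.smul_sum]

-- new part
noncomputable abbrev Dsp (k : ℕ) := Fin 3 → (restrictTotalDegree (Fin 3) ℝ k)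

noncomputable def iota (k : ℕ) : Dsp k →ₗ[ℝ] (Fin 3 → Poly3) :=
  LinearMap.pi (fun i => (restrictTotalDegree (Fin 3) ℝ k).subtype ∘ₗ LinearMap.proj i)

lemma iota_injective (k : ℕ) : Function.Injective (iota k) := by
  intro p q h
  funext i
  exact Subtype.ext (congrFun h i)

noncomputable def gmap (k : ℕ) : Dsp k →ₗ[ℝ] Poly3 :=
  (homogeneousComponent (k+1)) ∘ₗ dotX ∘ₗ iota k

lemma gmap_apply (k : ℕ) (p : Dsp k) :
    gmap k p = homogeneousComponent (k+1) (∑ i, X i * (p i : Poly3)) := rfl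

lemma X_mul_monomial' (i : Fin 3) (t : Fin 3 →₀ ℕ) (c : ℝ) :
    X i * monomial t c = monomial (Finsupp.single i 1 + t) c := by
  rw [show (X i : Poly3) = monomial (Finsupp.single i 1) 1 from rfl, monomial_mul, one_mul]

lemma range_gmap (k : ℕ) :
    LinearMap.range (gmap k) = homogeneousSubmodule (Fin 3) ℝ (k+1) := by
  apply le_antisymm
  · rintro _ ⟨p, rfl⟩
    exact homogeneousComponent_mem _ _
  · intro q hq
    rw [← support_sum_monomial_coeff q]
    apply Submodule.sum_mem
    intro d hd
    have hdeg : d.degree = k + 1 := by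
      have : (Finsupp.weight 1) d = k + 1 := hq (mem_support_iff.mp hd)
      rwa [Finsupp.degree_eq_weight_one]
    have hsupp : ∃ i, d i ≠ 0 := by
      by_contra h
      push_neg at h
      have : d = 0 := Finsupp.ext h
      simp [this, map_zero] at hdeg
    obtain ⟨i, hi⟩ := hsupp
    have hds := degree_sub_single d i hi
    -- the preimage
    have hmem : (monomial (d - Finsupp.single i 1) (coeff d q) : Poly3)
        ∈ restrictTotalDegree (Fin 3) ℝ k := by
      rw [mem_restrictTotalDegree]
      refine le_trans (totalDegree_monomial_le _ _) ?_
      show (d - Finsupp.single i 1).degree ≤ k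
      omega
    refine ⟨Pi.single i ⟨_, hmem⟩, ?_⟩
    rw [gmap_apply]
    have hsum : (∑ j, X j * ((Pi.single i (⟨_, hmem⟩ : restrictTotalDegree (Fin 3) ℝ k) : Dsp k) j : Poly3))
        = X i * monomial (d - Finsupp.single i 1) (coeff d q) := by
      rw [Finset.sum_eq_single i (fun j _ hj => by rw [Pi.single_eq_of_ne hj]; simp)
        (fun h => absurd (Finset.mem_univ i) h), Pi.single_eq_same]
    rw [hsum, X_mul_monomial']
    have hd' : Finsupp.single i 1 + (d - Finsupp.single i 1) = d := by
      ext j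
      rcases eq_or_ne j i with rfl | hji
      · simp only [Finsupp.add_apply, Finsupp.tsub_apply, Finsupp.single_eq_same]
        omega
      · simp [Finsupp.single_apply, Ne.symm hji]
    rw [hd']
    exact homogeneousComponent_of_mem (isHomogeneous_monomial _ hdeg) |>.trans (by simp)

def slackEquiv (k : ℕ) : {P : Fin 3 → ℕ // ∑ i, P i ≤ k} ≃ {P : Fin 4 → ℕ // ∑ i, P i = k} where
  toFun P := ⟨Fin.cons (k - ∑ i, P.1 i) P.1, by
    rw [Fin.sum_cons]; have := P.2; omega⟩
  invFun Q := ⟨Fin.tail Q.1, by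
    have hQ := Q.2
    rw [Fin.sum_univ_succ] at hQ
    have ht : ∑ i : Fin 3, Fin.tail Q.1 i = ∑ i : Fin 3, Q.1 i.succ := rfl
    omega⟩
  left_inv P := Subtype.ext (by simp)
  right_inv Q := Subtype.ext (by
    funext j
    refine Fin.cases ?_ (fun i => ?_) j
    · simp only [Fin.cons_zero]
      have hQ := Q.2
      rw [Fin.sum_univ_succ] at hQ
      have ht : ∑ i : Fin 3, Fin.tail Q.1 i = ∑ i : Fin 3, Q.1 i.succ := rfl
      omega
    · simp only [Fin.cons_succ]
      rfl)

lemma cardLe (k : ℕ) :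
    Nat.card {d : Fin 3 →₀ ℕ // (d.sum fun _ e => e) ≤ k} = (k+3).choose 3 := by
  have hsum : ∀ d : Fin 3 →₀ ℕ, (d.sum fun _ e => e) = ∑ i, d i := fun d =>
    Finset.sum_subset (Finset.subset_univ _) (by simp)
  have e1 : {d : Fin 3 →₀ ℕ // (d.sum fun _ e => e) ≤ k} ≃ {P : Fin 3 → ℕ // ∑ i, P i ≤ k} :=
    Finsupp.equivFunOnFinite.subtypeEquiv (fun d => by rw [hsum d]; rfl)
  have := Nat.card_congr ((e1.trans (slackEquiv k)).trans (Sym.equivNatSumOfFintype (Fin 4) k).symm)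
  rw [this, Nat.card_eq_fintype_card, Sym.card_sym_fin_eq_multichoose, Nat.multichoose_eq]
  have h := Nat.choose_symm (show 3 ≤ k + 3 by omega)
  simp only [Nat.add_sub_cancel] at h
  rw [show 4 + k - 1 = k + 3 by omega, h]

lemma cardDeg (n : ℕ) :
    Nat.card {d : Fin 3 →₀ ℕ // d.degree = n} = Nat.multichoose 3 n := by
  have e1 : {d : Fin 3 →₀ ℕ // d.degree = n} ≃ Sym (Fin 3) n :=
    (Equiv.subtypeEquivRight (fun d => Iff.rfl)).trans (Sym.equivNatSum (Fin 3) n).symm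
  rw [Nat.card_congr e1, Nat.card_eq_fintype_card, Sym.card_sym_fin_eq_multichoose]

instance (k : ℕ) : Module.Free ℝ (restrictTotalDegree (Fin 3) ℝ k) :=
  Module.Free.of_basis (basisRestrictSupport ℝ _)

lemma finrank_restrict (k : ℕ) :
    Module.finrank ℝ (restrictTotalDegree (Fin 3) ℝ k) = (k+3).choose 3 := by
  exact (Module.finrank_eq_nat_card_basis
    (basisRestrictSupport ℝ {n : Fin 3 →₀ ℕ | (n.sum fun _ e => e) ≤ k})).trans (cardLe k)

lemma finrank_Dsp (k : ℕ) : Module.finrank ℝ (Dsp k) = 3 * (k+3).choose 3 := by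
  rw [Module.finrank_pi_fintype]
  simp [finrank_restrict]

lemma finrank_homog (n : ℕ) :
    Module.finrank ℝ (homogeneousSubmodule (Fin 3) ℝ n) = Nat.multichoose 3 n := by
  have h : homogeneousSubmodule (Fin 3) ℝ n = restrictSupport ℝ {d | d.degree = n} := by
    rw [homogeneousSubmodule_eq_finsupp_supported]; rfl
  rw [h]
  exact (Module.finrank_eq_nat_card_basis
    (basisRestrictSupport ℝ {d : Fin 3 →₀ ℕ | d.degree = n})).trans (cardDeg n)

lemma multichoose_31 (k : ℕ) : Nat.multichoose 3 (k+1) = (k+3).choose 2 := by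
  rw [Nat.multichoose_eq]
  have h := Nat.choose_symm (show 2 ≤ k + 3 by omega)
  rw [show k + 3 - 2 = k + 1 by omega] at h
  rw [show 3 + (k+1) - 1 = k + 3 by omega, h]

lemma arith (k F : ℕ) (h : (k+3).choose 2 + F = 3 * ((k+3).choose 3)) :
    F = k * (k + 2) * (k + 3) / 2 := by
  have c1 : (k+3) * ((k+2).choose 1) = (k+3).choose 2 * 2 := Nat.add_one_mul_choose_eq (k+2) 1
  have c1' : (k+2).choose 1 = k + 2 := Nat.choose_one_right _
  have c2 : (k+3) * ((k+2).choose 2) = (k+3).choose 3 * 3 := Nat.add_one_mul_choose_eq (k+2) 2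
  have c3 : (k+2) * ((k+1).choose 1) = (k+2).choose 2 * 2 := Nat.add_one_mul_choose_eq (k+1) 1
  have c3' : (k+1).choose 1 = k + 1 := Nat.choose_one_right _
  rw [c1'] at c1
  rw [c3'] at c3
  have hb : 2 * ((k+3).choose 2) = (k+3) * (k+2) := by rw [mul_comm, ← c1]
  have h6 : 6 * ((k+3).choose 3) = (k+3) * ((k+2) * (k+1)) := by
    calc 6 * ((k+3).choose 3) = ((k+3).choose 3 * 3) * 2 := by ring
      _ = ((k+3) * ((k+2).choose 2)) * 2 := by rw [c2]
      _ = (k+3) * ((k+2).choose 2 * 2) := by ring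
      _ = (k+3) * ((k+2) * (k+1)) := by rw [← c3]
  have h6' : 6 * ((k+3).choose 3) = k*((k+2)*(k+3)) + (k+3)*(k+2) := by rw [h6]; ring
  have key : (k+3)*(k+2) + 2*F = k*((k+2)*(k+3)) + (k+3)*(k+2) := by
    calc (k+3)*(k+2) + 2*F = 2*((k+3).choose 2) + 2*F := by rw [hb]
      _ = 2*((k+3).choose 2 + F) := by ring
      _ = 2*(3*((k+3).choose 3)) := by rw [h]
      _ = 6*((k+3).choose 3) := by ring
      _ = _ := h6'
  rw [show k*(k+2)*(k+3) = k*((k+2)*(k+3)) from by ring]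
  generalize hA : k*((k+2)*(k+3)) = A at key ⊢
  generalize hB : (k+3)*(k+2) = B at key
  omega

-- Part 1: directness
lemma directness (k : ℕ) (hk : 1 ≤ k) (v : (Fin 3 → ℝ) → (Fin 3 → ℝ))
    (h1 : IsVecPolyDeg ((k : ℤ) - 1) v) (h2 : MemS k v) : v = 0 := by
  have : ∀ i x, v x i = 0 := by
    intro i
    obtain ⟨p, hp, hpe⟩ := h1 i
    obtain ⟨q, hq, hqe⟩ := h2.1 i
    have hpq : p = q := MvPolynomial.funext (fun x => by rw [hpe, hqe])
    subst hpq
    have hp0 : p = 0 := by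
      rcases hp with h | h
      · exact h
      · by_contra hne
        have := hq.totalDegree hne
        omega
    intro x
    rw [← hqe x, hp0, map_zero]
  funext x i
  exact this i x

lemma memR_eq (k : ℕ) (hk : 1 ≤ k) :
    {v : (Fin 3 → ℝ) → (Fin 3 → ℝ) | MemR k v} =
      ↑((LinearMap.ker (gmap k)).map (evalMap ∘ₗ iota k)) := by
  ext v
  simp only [Set.mem_setOf_eq, SetLike.mem_coe, Submodule.mem_map, LinearMap.mem_ker]
  constructor
  · rintro ⟨v₁, v₂, h1, h2, rfl⟩
    choose p hp hpe using h1
    choose q hq hqe using h2.1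
    have hpk : ∀ i, (p i).totalDegree ≤ k - 1 := by
      intro i
      rcases hp i with h | h
      · simp [h]
      · omega
    have hqk : ∀ i, (q i).totalDegree ≤ k := fun i => (hq i).totalDegree_le
    have hmem : ∀ i, p i + q i ∈ restrictTotalDegree (Fin 3) ℝ k := by
      intro i
      rw [mem_restrictTotalDegree]
      refine le_trans (totalDegree_add _ _) (max_le (le_trans (hpk i) (by omega)) (hqk i))
    refine ⟨fun i => ⟨p i + q i, hmem i⟩, ?_, ?_⟩
    · rw [gmap_apply]
      have hsplit : (∑ i, X i * ((p i + q i : Poly3))) = (∑ i, X i * p i) + ∑ i, X i * q i := by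
        rw [← Finset.sum_add_distrib]
        exact Finset.sum_congr rfl (fun i _ => by ring)
      rw [hsplit, map_add]
      have hzero1 : homogeneousComponent (k+1) (∑ i, X i * p i) = 0 := by
        apply homogeneousComponent_eq_zero
        refine lt_of_le_of_lt (totalDegree_finset_sum _ _) ?_
        rw [Finset.sup_lt_iff (by omega : (0:ℕ) < k + 1)]
        intro i _
        have h1 : (X i * p i).totalDegree ≤ (X i).totalDegree + (p i).totalDegree :=
          totalDegree_mul _ _
        have h2 : (X i : Poly3).totalDegree = 1 := totalDegree_X i
        have h3 := hpk i
        omega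
      have hq0 : (∑ i, X i * q i) = 0 := by
        apply MvPolynomial.funext
        intro x
        have h := h2.2 x
        simp only [map_sum, map_mul, eval_X, map_zero]
        simpa [hqe] using h
      rw [hzero1, hq0, map_zero, add_zero]
    · funext x i
      show eval x (p i + q i) = (v₁ + v₂) x i
      rw [map_add, hpe i x, hqe i x]
      rfl
  · rintro ⟨P, hker, rfl⟩
    set Q : Fin 3 → Poly3 := fun i => homogeneousComponent k ((P i : Poly3)) with hQdef
    have hQhom : ∀ i, (Q i).IsHomogeneous k := fun i => homogeneousComponent_isHomogeneous k _
    have hQsum : (∑ i, X i * Q i) = 0 := by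
      have h : ∑ i, X i * Q i = homogeneousComponent (k+1) (∑ i, X i * (P i : Poly3)) := by
        rw [map_sum]
        exact Finset.sum_congr rfl (fun i _ => (homcomp_X_mul k i _).symm)
      rw [h, ← gmap_apply, hker]
    refine ⟨fun x i => eval x ((P i : Poly3) - Q i), fun x i => eval x (Q i), ?_, ⟨?_, ?_⟩, ?_⟩
    · intro i
      refine ⟨(P i : Poly3) - Q i, Or.inr ?_, fun x => rfl⟩
      have htd : ((P i : Poly3) - Q i).totalDegree ≤ k - 1 := by
        apply Finset.sup_le
        intro d hd
        have hne := mem_support_iff.mp hd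
        have hdd : d.degree ≤ k - 1 := by
          by_contra hlt
          push_neg at hlt
          apply hne
          rw [coeff_sub, hQdef, coeff_homogeneousComponent]
          rcases eq_or_lt_of_le (show k ≤ d.degree by omega) with h | h
          · simp [← h]
          · have hPk : ((P i : Poly3)).totalDegree ≤ k :=
              (mem_restrictTotalDegree _ _ _).mp (P i).2
            have hcz : coeff d ((P i : Poly3)) = 0 := by
              apply coeff_eq_zero_of_totalDegree_lt
              have : (∑ j ∈ d.support, d j) = d.degree := rfl
              omega
            simp [hcz, show d.degree ≠ k by omega]
        exact hdd
      omega
    · intro i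
      exact ⟨Q i, hQhom i, fun x => rfl⟩
    · intro x
      calc ∑ i, x i * eval x (Q i) = eval x (∑ i, X i * Q i) := by
            simp [map_sum]
        _ = 0 := by rw [hQsum, map_zero]
    · funext x i
      show eval x ((P i : Poly3)) = _
      show _ = eval x ((P i : Poly3) - Q i) + eval x (Q i)
      rw [map_sub]
      ring

end Aux

set_option synthInstance.maxHeartbeats 1000000 in
set_option maxHeartbeats 1000000 in
/-- R_k = 𝐏_{k-1} ⊕ S_k is a direct sum of dimension k(k+2)(k+3)/2. -/
theorem stmt_9 (k : ℕ) (hk : 1 ≤ k) :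
    (∀ v : (Fin 3 → ℝ) → (Fin 3 → ℝ), IsVecPolyDeg ((k : ℤ) - 1) v → MemS k v → v = 0) ∧
    Module.finrank ℝ ↥(Submodule.span ℝ {v : (Fin 3 → ℝ) → (Fin 3 → ℝ) | MemR k v}) =
      k * (k + 2) * (k + 3) / 2 := by
  constructor
  · exact directness k hk
  · rw [memR_eq k hk, Submodule.span_eq]
    have hinj : Function.Injective ⇑(evalMap ∘ₗ iota k) := by
      rw [LinearMap.coe_comp]
      exact evalMap_injective.comp (iota_injective k)
    have e : (↥(LinearMap.ker (gmap k))) ≃ₗ[ℝ]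
        ↥((LinearMap.ker (gmap k)).map (evalMap ∘ₗ iota k)) :=
      Submodule.equivMapOfInjective (evalMap ∘ₗ iota k) hinj (LinearMap.ker (gmap k))
    have hfr : Module.finrank ℝ ↥(LinearMap.ker (gmap k)) =
        Module.finrank ℝ ↥((LinearMap.ker (gmap k)).map (evalMap ∘ₗ iota k)) :=
      LinearEquiv.finrank_eq e
    rw [← hfr]
    have hrn := LinearMap.finrank_range_add_finrank_ker (gmap k)
    rw [range_gmap k, finrank_homog (k+1), multichoose_31 k, finrank_Dsp k] at hrn
    exact arith k _ hrn
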